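/- Let V be a 2-dimensional real inner product space with orientation and j rotation by π/2. For a linear endomorphism β of V with adjoint β*, the following are equivalent: (i) jβ = βj; (ii) β* + β = c·Id for some real c. Moreover in that case c = trace(β). -/

import Mathlib

open RealInnerProductSpace

/-- for an endomorphism `β` of an oriented 2-dimensional real
inner product space with rotation `j` by `π/2`, `jβ = βj` iff
`β* + β = c·Id` for some real `c`; moreover in that case `c = trace β`. -/
theorem commutes_iff_adjoint_add_self_smul_id {V : Type*} [NormedAddCommGroup V]
    [InnerProductSpace ℝ V] [FiniteDimensional ℝ V]
    (h2 : Module.finrank ℝ V = 2) (j : V →ₗ[ℝ] V)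
    (hj2 : j ∘ₗ j = -LinearMap.id)
    (hjiso : ∀ u : V, ⟪j u, j u⟫ = ⟪u, u⟫)
    (hjorth : ∀ u : V, ⟪j u, u⟫ = 0)
    (β : V →ₗ[ℝ] V) :
    (j ∘ₗ β = β ∘ₗ j ↔ ∃ c : ℝ, LinearMap.adjoint β + β = c • LinearMap.id) ∧
      ∀ c : ℝ, LinearMap.adjoint β + β = c • LinearMap.id →
        c = LinearMap.trace ℝ V β := by
  -- polarized isometry
  have hj' : ∀ u v : V, ⟪j u, j v⟫ = ⟪u, v⟫ := by
    intro u v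
    have h1 := hjiso (u + v)
    have h2 := hjiso u
    have h3 := hjiso v
    rw [map_add, real_inner_add_add_self, real_inner_add_add_self] at h1
    linarith
  -- pick a unit vector
  have : Nontrivial V := Module.nontrivial_of_finrank_pos (R := ℝ) (by omega)
  obtain ⟨v0, hv0⟩ := exists_ne (0 : V)
  set e : V := ‖v0‖⁻¹ • v0 with he
  have hne : ‖e‖ = 1 := by
    rw [he, norm_smul, norm_inv, norm_norm, inv_mul_cancel₀ (norm_ne_zero_iff.mpr hv0)]
  set f : V := j e with hf
  have hee : ⟪e, e⟫ = 1 := by rw [real_inner_self_eq_norm_sq, hne]; norm_num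
  have hff : ⟪f, f⟫ = 1 := by rw [hf, hjiso]; exact hee
  have hfe : ⟪f, e⟫ = 0 := hjorth e
  have hef : ⟪e, f⟫ = 0 := by rw [← real_inner_comm]; exact hfe
  have hjf : j f = -e := by
    have := LinearMap.congr_fun hj2 e
    simpa using this
  -- inner products with j
  have hA : ∀ x : V, ⟪j x, e⟫ = -⟪x, f⟫ := by
    intro x
    have h : (e : V) = -(j f) := by rw [hjf]; simp
    rw [h, inner_neg_right, hj' x f]
  have hB : ∀ x : V, ⟪j x, f⟫ = ⟪x, e⟫ := fun x => hj' x e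
  -- orthonormal family
  have hon : Orthonormal ℝ ![e, f] := by
    rw [orthonormal_iff_ite]
    intro i k
    fin_cases i <;> fin_cases k <;>
      simp [hee, hff, hfe, hef, hne, (by rw [@norm_eq_sqrt_re_inner ℝ, hff]; simp : ‖f‖ = 1)]
  have hcard : Fintype.card (Fin 2) = Module.finrank ℝ V := by simp [h2]
  set b : Module.Basis (Fin 2) ℝ V := basisOfLinearIndependentOfCardEqFinrank hon.linearIndependent hcard
    with hb
  have hbcoe : ⇑b = ![e, f] := coe_basisOfLinearIndependentOfCardEqFinrank _ _
  have hb0 : b 0 = e := by rw [hbcoe]; rfl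
  have hb1 : b 1 = f := by rw [hbcoe]; rfl
  have honb : Orthonormal ℝ ⇑b := by rwa [hbcoe]
  set ob : OrthonormalBasis (Fin 2) ℝ V := b.toOrthonormalBasis honb with hob
  have hob0 : ob 0 = e := by
    rw [hob, Module.Basis.coe_toOrthonormalBasis, hb0]
  have hob1 : ob 1 = f := by
    rw [hob, Module.Basis.coe_toOrthonormalBasis, hb1]
  -- expansion
  have hexp : ∀ x : V, x = ⟪x, e⟫ • e + ⟪x, f⟫ • f := by
    intro x
    have h := ob.sum_repr' x
    rw [Fin.sum_univ_two, hob0, hob1, real_inner_comm x e, real_inner_comm x f] at h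
    exact h.symm
  -- equality test
  have ext2 : ∀ x y : V, ⟪x, e⟫ = ⟪y, e⟫ → ⟪x, f⟫ = ⟪y, f⟫ → x = y := by
    intro x y h1 h2
    rw [hexp x, hexp y, h1, h2]
  have key : ∀ x y : V, ⟪x, LinearMap.adjoint β y + β y⟫ = ⟪x, β y⟫ + ⟪β x, y⟫ := by
    intro x y
    rw [inner_add_right, LinearMap.adjoint_inner_right]
    ring
  constructor
  · constructor
    · intro hcomm
      have hce : j (β e) = β f := by
        have := LinearMap.congr_fun hcomm e
        simpa [hf] using this
      have h1 : ⟪β f, e⟫ = -⟪β e, f⟫ := by rw [← hce, hA]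
      have h2 : ⟪β f, f⟫ = ⟪β e, e⟫ := by rw [← hce, hB]
      refine ⟨2 * ⟪β e, e⟫, ?_⟩
      apply b.ext
      intro i
      fin_cases i <;>
        simp only [Fin.zero_eta, Fin.mk_one, Fin.isValue, hb0, hb1, LinearMap.add_apply,
          LinearMap.smul_apply, LinearMap.id_apply]
      · apply ext2
        · rw [inner_add_left, real_inner_smul_left, LinearMap.adjoint_inner_left, hee]
          linarith [real_inner_comm (β e) e]
        · rw [inner_add_left, real_inner_smul_left, LinearMap.adjoint_inner_left, hef]
          linarith [real_inner_comm (β f) e, h1]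
      · apply ext2
        · rw [inner_add_left, real_inner_smul_left, LinearMap.adjoint_inner_left, hfe]
          linarith [real_inner_comm (β e) f, h1]
        · rw [inner_add_left, real_inner_smul_left, LinearMap.adjoint_inner_left, hff]
          linarith [real_inner_comm (β f) f, h2]
    · rintro ⟨c, hc⟩
      have hgen : ∀ x y : V, ⟪x, β y⟫ + ⟪β x, y⟫ = c * ⟪x, y⟫ := by
        intro x y
        have hy := LinearMap.congr_fun hc y
        simp only [LinearMap.add_apply, LinearMap.smul_apply, LinearMap.id_apply] at hy
        have hk := key x y
        rw [hy, real_inner_smul_right] at hk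
        linarith
      have h1 : ⟪β f, e⟫ = -⟪β e, f⟫ := by
        have h := hgen e f
        rw [hef] at h
        linarith [real_inner_comm (β f) e]
      have h2 : ⟪β f, f⟫ = ⟪β e, e⟫ := by
        have ha := hgen e e
        have hd := hgen f f
        rw [hee] at ha
        rw [hff] at hd
        linarith [real_inner_comm (β e) e, real_inner_comm (β f) f]
      apply b.ext
      intro i
      fin_cases i <;>
        simp only [Fin.zero_eta, Fin.mk_one, Fin.isValue, hb0, hb1, LinearMap.comp_apply]
      · rw [← hf]
        apply ext2
        · rw [hA, h1]
        · rw [hB, h2]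
      · rw [hjf, map_neg]
        apply ext2
        · rw [hA, inner_neg_left, h2]
        · rw [hB, inner_neg_left, h1]
  · intro c hc
    have hgen : ∀ x y : V, ⟪x, β y⟫ + ⟪β x, y⟫ = c * ⟪x, y⟫ := by
      intro x y
      have hy := LinearMap.congr_fun hc y
      simp only [LinearMap.add_apply, LinearMap.smul_apply, LinearMap.id_apply] at hy
      have hk := key x y
      rw [hy, real_inner_smul_right] at hk
      linarith
    have ha := hgen e e
    have hd := hgen f f
    rw [hee] at ha
    rw [hff] at hd
    have htr : LinearMap.trace ℝ V β = ⟪β e, e⟫ + ⟪β f, f⟫ := by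
      rw [LinearMap.trace_eq_matrix_trace ℝ b, Matrix.trace_fin_two,
        LinearMap.toMatrix_apply, LinearMap.toMatrix_apply, hb0, hb1]
      have r0 : b.repr (β e) 0 = ⟪β e, e⟫ := by
        have hx : β e = ⟪β e, e⟫ • b 0 + ⟪β e, f⟫ • b 1 := by rw [hb0, hb1]; exact hexp (β e)
        conv_lhs => rw [hx]
        simp
      have r1 : b.repr (β f) 1 = ⟪β f, f⟫ := by
        have hx : β f = ⟪β f, e⟫ • b 0 + ⟪β f, f⟫ • b 1 := by rw [hb0, hb1]; exact hexp (β f)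
        conv_lhs => rw [hx]
        simp
      rw [r0, r1]
    rw [htr]
    linarith [real_inner_comm (β e) e, real_inner_comm (β f) f]
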